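/- Let C be a λ-fold 1-packing in H(n,q) with q>2, and let x∈C. Then n(q-1)A_0(x) + (q-1)A_1(x) + 2A_2(x) ≤ n(q-1)λ, where A_i(x) = |{y∈C : d(x,y)=i}| (counted with multiplicity). -/

import Mathlib

open Finset in
private lemma swap_sum' {α β : Type*} (S : Finset β) (C : Multiset α) (F : β → α → ℕ) :
    ∑ v ∈ S, (C.map (F v)).sum = (C.map (fun c => ∑ v ∈ S, F v c)).sum := by
  induction C using Multiset.induction with
  | empty => simp
  | cons a s ih => simp [Finset.sum_add_distrib, ih]

private lemma filter_card_eq_sum' {α : Type*} (C : Multiset α) (p : α → Prop) [DecidablePred p] :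
    (C.filter p).card = (C.map (fun c => if p c then 1 else 0)).sum := by
  induction C using Multiset.induction with
  | empty => simp
  | cons a s ih => by_cases h : p a <;> simp [h, ih, Nat.add_comm]

open Finset in
private lemma tri_sum' {q n : ℕ} (x : Fin n → Fin q) (C : Multiset (Fin n → Fin q)) (a b c : ℕ) :
    (C.map (fun y => if hammingDist x y = 0 then a else if hammingDist x y = 1 then b
        else if hammingDist x y = 2 then c else 0)).sum
      = a * (C.filter (fun y => hammingDist x y = 0)).card
        + b * (C.filter (fun y => hammingDist x y = 1)).card
        + c * (C.filter (fun y => hammingDist x y = 2)).card := by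
  induction C using Multiset.induction with
  | empty => simp
  | cons z s ih =>
    simp only [Multiset.map_cons, Multiset.sum_cons, Multiset.filter_cons, ih]
    by_cases h0 : hammingDist x z = 0
    · simp [h0]; ring
    · by_cases h1 : hammingDist x z = 1
      · simp [h0, h1]; ring
      · by_cases h2 : hammingDist x z = 2
        · simp [h0, h1, h2]; ring
        · simp [h0, h1, h2]
open Finset

section helpers
variable {q n : ℕ}

lemma hd_card (x y : Fin n → Fin q) :
    hammingDist x y = (univ.filter (fun i => x i ≠ y i)).card := rfl

lemma hd_update (x : Fin n → Fin q) (i : Fin n) (b : Fin q) (hb : b ≠ x i) :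
    hammingDist x (Function.update x i b) = 1 := by
  rw [hd_card]
  have : (univ.filter (fun j => x j ≠ Function.update x i b j)) = {i} := by
    ext j
    by_cases h : j = i <;> simp [Function.update_apply, h, Ne.symm hb]
  rw [this, card_singleton]

lemma sphere_card (x : Fin n → Fin q) :
    ((univ : Finset (Fin n → Fin q)).filter (fun v => hammingDist x v = 1)).card
      = n * (q - 1) := by
  classical
  have key : (((univ : Finset (Fin n × Fin q)).filter (fun p => p.2 ≠ x p.1)).card)
      = ((univ : Finset (Fin n → Fin q)).filter (fun v => hammingDist x v = 1)).card := by
    apply Finset.card_bij (fun p _ => Function.update x p.1 p.2)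
    · intro p hp
      simp only [mem_filter, mem_univ, true_and] at hp ⊢
      exact hd_update x p.1 p.2 hp
    · intro p hp p' hp' h
      simp only [mem_filter, mem_univ, true_and] at hp hp'
      by_cases hi : p.1 = p'.1
      · have h2 : p.2 = p'.2 := by
          have := congrFun h p.1
          rwa [Function.update_self, hi, Function.update_self] at this
        exact Prod.ext hi h2
      · exfalso
        have := congrFun h p'.1
        rw [Function.update_self, Function.update_of_ne (Ne.symm hi)] at this
        exact hp' this.symm
    · intro v hv
      simp only [mem_filter, mem_univ, true_and] at hv
      rw [hd_card] at hv
      obtain ⟨i, hi⟩ := Finset.card_eq_one.mp hv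
      refine ⟨(i, v i), ?_, ?_⟩
      · simp only [mem_filter, mem_univ, true_and]
        have : i ∈ ({i} : Finset (Fin n)) := mem_singleton_self i
        rw [← hi, mem_filter] at this
        exact fun h => this.2 h.symm
      · funext j
        by_cases h : j = i
        · subst h; simp
        · rw [Function.update_of_ne h]
          by_contra hne
          have : j ∈ ({i} : Finset (Fin n)) := by rw [← hi]; simp [hne]
          exact h (mem_singleton.mp this)
  rw [← key]
  rw [Finset.card_filter]
  rw [Fintype.sum_prod_type]
  have : ∀ i : Fin n, (∑ b : Fin q, if b ≠ x i then 1 else 0) = q - 1 := by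
    intro i
    rw [← Finset.card_filter, Finset.filter_ne', Finset.card_erase_of_mem (mem_univ _), card_univ,
      Fintype.card_fin]
  simp only [this, Finset.sum_const, card_univ, Fintype.card_fin, smul_eq_mul]
end helpers


section helpers
variable {q n : ℕ}


lemma near_count_one (x c : Fin n → Fin q) (hc : hammingDist x c = 1) :
    q - 1 ≤ (((univ : Finset (Fin n → Fin q)).filter (fun v => hammingDist x v = 1)).filter
      (fun v => hammingDist v c ≤ 1)).card := by
  classical
  rw [hd_card] at hc
  obtain ⟨i, hi⟩ := Finset.card_eq_one.mp hc
  have hoff : ∀ j, j ≠ i → x j = c j := by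
    intro j hj
    by_contra hne
    exact hj (mem_singleton.mp (by rw [← hi, mem_filter]; exact ⟨mem_univ _, hne⟩))
  have := Finset.card_le_card_of_injOn (f := fun b => Function.update x i b)
    (s := univ.erase (x i))
    (t := ((univ : Finset (Fin n → Fin q)).filter (fun v => hammingDist x v = 1)).filter
      (fun v => hammingDist v c ≤ 1)) ?_ ?_
  · rwa [Finset.card_erase_of_mem (mem_univ _), card_univ, Fintype.card_fin] at this
  · intro b hb
    rw [Finset.mem_coe, mem_erase] at hb
    simp only [Finset.mem_coe, mem_filter, mem_univ, true_and]
    constructor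
    · rw [hd_card]
      have : (univ.filter (fun j => x j ≠ Function.update x i b j)) = {i} := by
        ext j
        by_cases h : j = i <;> simp [Function.update_apply, h, Ne.symm hb.1]
      rw [this, card_singleton]
    · rw [hd_card]
      calc (univ.filter (fun j => Function.update x i b j ≠ c j)).card
          ≤ ({i} : Finset (Fin n)).card := by
            apply Finset.card_le_card
            intro j hj
            rw [mem_filter] at hj
            rw [mem_singleton]
            by_contra h
            exact hj.2 (by rw [Function.update_of_ne h]; exact hoff j h)
        _ = 1 := card_singleton i
  · intro b _ b' _ h
    have := congrFun h i
    simpa using this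

lemma near_count_two (x c : Fin n → Fin q) (hc : hammingDist x c = 2) :
    2 ≤ (((univ : Finset (Fin n → Fin q)).filter (fun v => hammingDist x v = 1)).filter
      (fun v => hammingDist v c ≤ 1)).card := by
  classical
  rw [hd_card] at hc
  obtain ⟨i, j, hij, hD⟩ := Finset.card_eq_two.mp hc
  have hmem : ∀ k, k ∈ ({i, j} : Finset (Fin n)) ↔ x k ≠ c k := by
    intro k; rw [← hD, mem_filter]; simp
  have hxi : x i ≠ c i := (hmem i).mp (by simp)
  have hxj : x j ≠ c j := (hmem j).mp (by simp)
  set v1 := Function.update x i (c i) with hv1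
  set v2 := Function.update x j (c j) with hv2
  have key : ∀ (a b : Fin n), a ≠ b → x a ≠ c a → ({a, b} : Finset (Fin n)) = {i, j} →
      Function.update x a (c a) ∈ (((univ : Finset (Fin n → Fin q)).filter
        (fun v => hammingDist x v = 1)).filter (fun v => hammingDist v c ≤ 1)) := by
    intro a b hab hxa hset
    simp only [mem_filter, mem_univ, true_and]
    constructor
    · rw [hd_card]
      have : (univ.filter (fun k => x k ≠ Function.update x a (c a) k)) = {a} := by
        ext k
        by_cases h : k = a <;> simp [Function.update_apply, h, Ne.symm hxa, hxa]
      rw [this, card_singleton]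
    · rw [hd_card]
      calc (univ.filter (fun k => Function.update x a (c a) k ≠ c k)).card
          ≤ ({b} : Finset (Fin n)).card := by
            apply Finset.card_le_card
            intro k hk
            rw [mem_filter] at hk
            rw [mem_singleton]
            by_contra h
            rcases eq_or_ne k a with rfl | hka
            · exact hk.2 (by simp)
            · have : x k = c k := by
                by_contra hne
                have : k ∈ ({a, b} : Finset (Fin n)) := by rw [hset, hmem]; exact hne
                simp [hka, h] at this
              exact hk.2 (by rw [Function.update_of_ne hka]; exact this)
        _ = 1 := card_singleton b
  have h1 := key i j hij hxi rfl
  have h2 := key j i hij.symm hxj (by rw [Finset.pair_comm])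
  have hne : v1 ≠ v2 := by
    intro h
    have := congrFun h i
    rw [hv1, hv2, Function.update_self, Function.update_of_ne hij] at this
    exact hxi this.symm
  calc 2 = ({v1, v2} : Finset (Fin n → Fin q)).card := by
        rw [Finset.card_insert_of_notMem (by simp [hne]), card_singleton]
    _ ≤ _ := Finset.card_le_card (by
        intro v hv
        rcases Finset.mem_insert.mp hv with rfl | hv
        · exact h1
        · rw [mem_singleton] at hv; subst hv; exact h2)
end helpers

open Finset in
/-- Pointwise inequality for a λ-fold 1-packing. -/
theorem stmt_2 (q n lam : ℕ) (hq : 2 < q)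
    (C : Multiset (Fin n → Fin q))
    (hpack : ∀ v : Fin n → Fin q,
      (C.filter (fun c => hammingDist v c ≤ 1)).card ≤ lam)
    (x : Fin n → Fin q) (hx : x ∈ C) :
    n * (q - 1) * (C.filter (fun y => hammingDist x y = 0)).card
      + (q - 1) * (C.filter (fun y => hammingDist x y = 1)).card
      + 2 * (C.filter (fun y => hammingDist x y = 2)).card
      ≤ n * (q - 1) * lam := by
  classical
  set S : Finset (Fin n → Fin q) :=
    (univ : Finset (Fin n → Fin q)).filter (fun v => hammingDist x v = 1) with hS
  -- the weight of a codeword: number of sphere points within distance 1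
  set g : (Fin n → Fin q) → ℕ := fun c => (S.filter (fun v => hammingDist v c ≤ 1)).card with hg
  -- total weight is at most |S| * lam
  have upper : (C.map g).sum ≤ n * (q - 1) * lam := by
    have : (C.map g).sum = ∑ v ∈ S, (C.filter (fun c => hammingDist v c ≤ 1)).card := by
      have e1 : ∀ c, g c = ∑ v ∈ S, (if hammingDist v c ≤ 1 then 1 else 0) := by
        intro c; show (S.filter (fun v => hammingDist v c ≤ 1)).card = _; rw [Finset.card_filter]
      simp only [e1]
      rw [← swap_sum' S C (fun v c => if hammingDist v c ≤ 1 then 1 else 0)]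
      refine Finset.sum_congr rfl fun v _ => ?_
      rw [filter_card_eq_sum']
    rw [this]
    calc ∑ v ∈ S, (C.filter (fun c => hammingDist v c ≤ 1)).card
        ≤ ∑ v ∈ S, lam := Finset.sum_le_sum fun v _ => hpack v
      _ = S.card * lam := by rw [Finset.sum_const, smul_eq_mul]
      _ = n * (q - 1) * lam := by rw [hS, sphere_card]
  -- pointwise lower bound on g
  have lower : n * (q - 1) * (C.filter (fun y => hammingDist x y = 0)).card
      + (q - 1) * (C.filter (fun y => hammingDist x y = 1)).card
      + 2 * (C.filter (fun y => hammingDist x y = 2)).card ≤ (C.map g).sum := by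
    rw [← tri_sum' x C (n * (q - 1)) (q - 1) 2]
    apply Multiset.sum_map_le_sum_map
    intro c _
    by_cases h0 : hammingDist x c = 0
    · simp only [h0, if_pos rfl, if_true]
      have hcx : c = x := (hammingDist_eq_zero.mp h0).symm
      have : S.filter (fun v => hammingDist v c ≤ 1) = S := by
        apply Finset.filter_true_of_mem
        intro v hv
        rw [hS, mem_filter] at hv
        rw [hcx, hammingDist_comm, hv.2]
      rw [hg]
      simp only [this]
      rw [hS, sphere_card]
    · by_cases h1 : hammingDist x c = 1
      · simpa [h0, h1] using near_count_one x c h1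
      · by_cases h2 : hammingDist x c = 2
        · simpa [h0, h1, h2] using near_count_two x c h2
        · simp [h0, h1, h2]
  exact le_trans lower upper
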